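/- For a Bratteli diagram Br with potential F, the set of F-geodesics Geo^F(Br) is nonempty. -/

import Mathlib

open scoped BigOperators

/-- A Bratteli diagram: finite nonempty level sets `V n`, arrows `E n` from level `n`
to level `n+1`, a single root at level `0`, no sinks, and no sources besides the root. -/
structure Bratteli where
  V : ℕ → Type
  E : ℕ → Type
  instVFin : ∀ n, Fintype (V n)
  instEFin : ∀ n, Fintype (E n)
  instVNe : ∀ n, Nonempty (V n)
  instRoot : Subsingleton (V 0)
  src : ∀ n, E n → V n
  rng : ∀ n, E n → V (n + 1)
  noSink : ∀ n (v : V n), ∃ e : E n, src n e = v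
  noSource : ∀ n (v : V (n + 1)), ∃ e : E n, rng n e = v

attribute [instance] Bratteli.instVFin Bratteli.instEFin Bratteli.instVNe Bratteli.instRoot

/-- Finite paths of length `n` starting at the root. -/
abbrev Bratteli.FinPath (B : Bratteli) (n : ℕ) :=
  { p : ∀ i : Fin n, B.E i.val //
    ∀ (i : ℕ) (h : i + 1 < n),
      B.rng i (p ⟨i, Nat.lt_of_succ_lt h⟩) = B.src (i + 1) (p ⟨i + 1, h⟩) }

/-- Infinite paths starting at the root. -/
structure Bratteli.InfPath (B : Bratteli) where
  arrow : ∀ n, B.E n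
  compat : ∀ n, B.rng n (arrow n) = B.src (n + 1) (arrow (n + 1))

/-- The initial segment `p[1,n]` of an infinite path. -/
def Bratteli.InfPath.take {B : Bratteli} (p : B.InfPath) (n : ℕ) : B.FinPath n :=
  ⟨fun i => p.arrow i.val, fun i _ => p.compat i⟩

/-- The endpoint (range) of a finite path of positive length. -/
def pend {B : Bratteli} {n : ℕ} (μ : B.FinPath (n + 1)) : B.V (n + 1) :=
  B.rng n (μ.1 ⟨n, Nat.lt_succ_self n⟩)

/-- The vertex at level `n` through which a path of length `n+1` passes. -/
def through {B : Bratteli} {n : ℕ} (μ : B.FinPath (n + 1)) : B.V n :=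
  B.src n (μ.1 ⟨n, Nat.lt_succ_self n⟩)

/-- The value `F(μ) = Σ_i F(a_i)` of a potential on a finite path. -/
noncomputable def pathVal {B : Bratteli} (F : ∀ n, B.E n → ℝ) {n : ℕ}
    (μ : B.FinPath n) : ℝ :=
  ∑ i : Fin n, F i.val (μ.1 i)

/-- An infinite path `p` from the root is an `F`-geodesic when for every `n`,
`F(p[1,n]) ≤ F(μ)` for every length-`n` path `μ` from the root with the same endpoint. -/
def IsGeodesic {B : Bratteli} (F : ∀ n, B.E n → ℝ) (p : B.InfPath) : Prop :=
  ∀ (n : ℕ) (μ : B.FinPath (n + 1)), pend μ = pend (p.take (n + 1)) →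
    pathVal F (p.take (n + 1)) ≤ pathVal F μ

section Aux

open CategoryTheory Opposite

variable {B : Bratteli}

/-- Truncation of a finite path. -/
def Brestrict {m n : ℕ} (h : m ≤ n) (μ : B.FinPath n) : B.FinPath m :=
  ⟨fun i => μ.1 ⟨i.1, lt_of_lt_of_le i.2 h⟩, fun i hi => μ.2 i (lt_of_lt_of_le hi h)⟩

lemma Brestrict_refl {n : ℕ} (μ : B.FinPath n) : Brestrict le_rfl μ = μ := rfl

lemma Brestrict_trans {k m n : ℕ} (h1 : k ≤ m) (h2 : m ≤ n) (μ : B.FinPath n) :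
    Brestrict h1 (Brestrict h2 μ) = Brestrict (h1.trans h2) μ := rfl

/-- Appending an arrow to a finite path. -/
def Bsnoc {n : ℕ} (μ : B.FinPath (n + 1)) (e : B.E (n + 1))
    (h : B.src (n + 1) e = pend μ) : B.FinPath (n + 2) := by
  refine ⟨fun i => Fin.lastCases (motive := fun i : Fin (n + 2) => B.E i.val) e
    (fun j => μ.1 j) i, ?_⟩
  intro i hi
  rcases Nat.lt_or_ge (i + 1) (n + 1) with hlt | hge
  · have e1 : (⟨i, Nat.lt_of_succ_lt hi⟩ : Fin (n + 2)) =
        Fin.castSucc ⟨i, Nat.lt_of_succ_lt hlt⟩ := rfl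
    have e2 : (⟨i + 1, hi⟩ : Fin (n + 2)) = Fin.castSucc ⟨i + 1, hlt⟩ := rfl
    show B.rng i (Fin.lastCases (motive := fun i : Fin (n + 2) => B.E i.val) e
        (fun j => μ.1 j) (Fin.castSucc ⟨i, Nat.lt_of_succ_lt hlt⟩)) =
      B.src (i + 1) (Fin.lastCases (motive := fun i : Fin (n + 2) => B.E i.val) e
        (fun j => μ.1 j) (Fin.castSucc ⟨i + 1, hlt⟩))
    rw [Fin.lastCases_castSucc, Fin.lastCases_castSucc]
    exact μ.2 i hlt
  · have hin : i = n := by omega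
    subst hin
    have e1 : (⟨i, Nat.lt_of_succ_lt hi⟩ : Fin (i + 2)) =
        Fin.castSucc ⟨i, Nat.lt_succ_self i⟩ := rfl
    have e2 : (⟨i + 1, hi⟩ : Fin (i + 2)) = Fin.last (i + 1) := rfl
    show B.rng i (Fin.lastCases (motive := fun j : Fin (i + 2) => B.E j.val) e
        (fun j => μ.1 j) (Fin.castSucc ⟨i, Nat.lt_succ_self i⟩)) =
      B.src (i + 1) (Fin.lastCases (motive := fun j : Fin (i + 2) => B.E j.val) e
        (fun j => μ.1 j) (Fin.last (i + 1)))
    rw [Fin.lastCases_castSucc, Fin.lastCases_last, h]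
    rfl

lemma pend_Bsnoc {n : ℕ} (μ : B.FinPath (n + 1)) (e : B.E (n + 1))
    (h : B.src (n + 1) e = pend μ) : pend (Bsnoc μ e h) = B.rng (n + 1) e := by
  show B.rng (n + 1) (Fin.lastCases (motive := fun j : Fin (n + 2) => B.E j.val) e
      (fun j => μ.1 j) (Fin.last (n + 1))) = B.rng (n + 1) e
  rw [Fin.lastCases_last]

lemma pathVal_Bsnoc {F : ∀ n, B.E n → ℝ} {n : ℕ} (μ : B.FinPath (n + 1)) (e : B.E (n + 1))
    (h : B.src (n + 1) e = pend μ) :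
    pathVal F (Bsnoc μ e h) = pathVal F μ + F (n + 1) e := by
  simp only [pathVal, Bsnoc, Fin.sum_univ_castSucc, Fin.lastCases_castSucc,
    Fin.lastCases_last, Fin.coe_castSucc, Fin.val_last]

lemma pathVal_Brestrict_succ {F : ∀ n, B.E n → ℝ} {n : ℕ} (μ : B.FinPath (n + 1)) :
    pathVal F μ = pathVal F (Brestrict (Nat.le_succ n) μ) +
      F n (μ.1 ⟨n, Nat.lt_succ_self n⟩) := by
  simp only [pathVal, Brestrict, Fin.sum_univ_castSucc, Fin.coe_castSucc, Fin.val_last]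
  rfl

/-- `μ` is a minimal-value path among paths with the same endpoint. -/
def MinP (F : ∀ n, B.E n → ℝ) : ∀ n, B.FinPath n → Prop
  | 0, _ => True
  | (_ + 1), μ => ∀ ν, pend ν = pend μ → pathVal F μ ≤ pathVal F ν

lemma pend_Brestrict {n : ℕ} (μ : B.FinPath (n + 2)) :
    pend (Brestrict (Nat.le_succ (n + 1)) μ) =
      B.src (n + 1) (μ.1 ⟨n + 1, Nat.lt_succ_self (n + 1)⟩) := by
  have := μ.2 n (Nat.lt_succ_self (n + 1))
  simpa [pend, Brestrict] using this

lemma minP_res {F : ∀ n, B.E n → ℝ} {n : ℕ} (μ : B.FinPath (n + 1)) (hμ : MinP F (n + 1) μ) :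
    MinP F n (Brestrict (Nat.le_succ n) μ) := by
  cases n with
  | zero => trivial
  | succ k =>
    intro ν hν
    set e : B.E (k + 1) := μ.1 ⟨k + 1, Nat.lt_succ_self (k + 1)⟩ with he
    have hsrc : B.src (k + 1) e = pend ν := by
      rw [hν, pend_Brestrict]
    have h1 : pend (Bsnoc ν e hsrc) = pend μ := by
      rw [pend_Bsnoc]; rfl
    have h2 := hμ (Bsnoc ν e hsrc) h1
    rw [pathVal_Bsnoc] at h2
    rw [pathVal_Brestrict_succ (F := F) μ] at h2
    linarith

lemma minP_restrict {F : ∀ n, B.E n → ℝ} :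
    ∀ (n m : ℕ) (h : m ≤ n) (μ : B.FinPath n), MinP F n μ → MinP F m (Brestrict h μ) := by
  intro n
  induction n with
  | zero => intro m h μ hμ; interval_cases m; exact trivial
  | succ k ih =>
    intro m h μ hμ
    rcases Nat.lt_or_ge m (k + 1) with hm | hm
    · have hm' : m ≤ k := Nat.lt_succ_iff.mp hm
      have : Brestrict h μ = Brestrict hm' (Brestrict (Nat.le_succ k) μ) := rfl
      rw [this]
      exact ih m hm' _ (minP_res μ hμ)
    · have : m = k + 1 := le_antisymm h hm
      subst this
      exact hμ

/-- Some path of every positive length exists. -/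
lemma exists_finPath : ∀ n : ℕ, ∃ μ : B.FinPath (n + 1), True := by
  intro n
  induction n with
  | zero =>
    obtain ⟨v⟩ := B.instVNe 0
    obtain ⟨e, _⟩ := B.noSink 0 v
    exact ⟨⟨fun i => Fin.cases (motive := fun i : Fin 1 => B.E i.val) e
      (fun j => j.elim0) i, fun i hi => by omega⟩, trivial⟩
  | succ k ih =>
    obtain ⟨μ, -⟩ := ih
    obtain ⟨e, he⟩ := B.noSink (k + 1) (pend μ)
    exact ⟨Bsnoc μ e he, trivial⟩

lemma exists_minP (F : ∀ n, B.E n → ℝ) (n : ℕ) : ∃ μ : B.FinPath n, MinP F n μ := by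
  cases n with
  | zero =>
    exact ⟨⟨fun i => i.elim0, fun i hi => by omega⟩, trivial⟩
  | succ k =>
    obtain ⟨μ0, -⟩ := exists_finPath (B := B) k
    have hfin : Set.Finite {ν : B.FinPath (k + 1) | pend ν = pend μ0} := Set.toFinite _
    obtain ⟨μ, hμmem, hμmin⟩ := Set.exists_min_image _ (pathVal F) hfin ⟨μ0, rfl⟩
    refine ⟨μ, fun ν hν => hμmin ν ?_⟩
    simp only [Set.mem_setOf_eq] at hμmem ⊢
    rw [hν, hμmem]

/-- The inverse system of minimal paths. -/
noncomputable def minFunctor (B : Bratteli) (F : ∀ n, B.E n → ℝ) : ℕᵒᵖ ⥤ Type where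
  obj n := { μ : B.FinPath n.unop // MinP F n.unop μ }
  map {n m} f := TypeCat.ofHom fun μ => ⟨Brestrict (leOfHom f.unop) μ.1, minP_restrict _ _ _ _ μ.2⟩
  map_id n := rfl
  map_comp f g := rfl

end Aux

/-- For any Bratteli diagram with potential `F`, the set of `F`-geodesics is nonempty. -/
theorem stmt_1 (B : Bratteli) (F : ∀ n, B.E n → ℝ) :
    ∃ p : B.InfPath, IsGeodesic F p := by
  classical
  have hfin : ∀ n : ℕᵒᵖ, Finite ((minFunctor B F).obj n) := fun n => by
    dsimp [minFunctor]; infer_instance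
  have hne : ∀ n : ℕᵒᵖ, Nonempty ((minFunctor B F).obj n) := fun n => by
    obtain ⟨μ, hμ⟩ := exists_minP F n.unop
    exact ⟨⟨μ, hμ⟩⟩
  obtain ⟨u, hu⟩ := nonempty_sections_of_finite_inverse_system (minFunctor B F)
  -- compatibility
  have hcomp : ∀ (m n : ℕ) (h : m ≤ n),
      (u (Opposite.op m)).1 = Brestrict h (u (Opposite.op n)).1 := by
    intro m n h
    have := @hu (Opposite.op n) (Opposite.op m) (CategoryTheory.homOfLE h).op
    exact congrArg Subtype.val this.symm
  have harrow : ∀ (n i : ℕ) (h : i < n),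
      (u (Opposite.op n)).1.1 ⟨i, h⟩ = (u (Opposite.op (i + 1))).1.1 ⟨i, Nat.lt_succ_self i⟩ := by
    intro n i h
    rw [hcomp (i + 1) n h]
    rfl
  refine ⟨⟨fun n => (u (Opposite.op (n + 1))).1.1 ⟨n, Nat.lt_succ_self n⟩, ?_⟩, ?_⟩
  · intro n
    dsimp only
    have h1 := harrow (n + 1 + 1) n (by omega)
    rw [← h1]
    exact (u (Opposite.op (n + 1 + 1))).1.2 n (Nat.lt_succ_self (n + 1))
  · intro n μ hμ
    have htake : ∀ m : ℕ, (Bratteli.InfPath.take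
        ⟨fun n => (u (Opposite.op (n + 1))).1.1 ⟨n, Nat.lt_succ_self n⟩, by
          intro n
          dsimp only
          have h1 := harrow (n + 1 + 1) n (by omega)
          rw [← h1]
          exact (u (Opposite.op (n + 1 + 1))).1.2 n (Nat.lt_succ_self (n + 1))⟩ m) = (u (Opposite.op m)).1 := by
      intro m
      apply Subtype.ext
      funext i
      exact (harrow m i.1 i.2).symm
    rw [htake (n + 1)] at hμ ⊢
    exact (u (Opposite.op (n + 1))).2 μ hμ
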